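/- Let D = (V, A, ψ) be a multidigraph, let s, t ∈ V, and let k ∈ ℕ. Let P and Q be two nonempty subsets of V with V = P ⊔ Q. Then |{B ∈ U_k : S(B) = P}| = Σ_{m ∈ ℕ} C(|A(P,Q)|, m) · |X_{k−m}^{P,Q}|, where C(n, m) denotes the binomial coefficient. -/

import Mathlib

/-!
A multidigraph is given by two finite types `V` (vertices) and `A` (arcs)
together with a map `ψ : A → V × V` sending each arc to its (source, target) pair.
For a subset `B ⊆ A`, the induced subdigraph `D⟨B⟩` has vertex set `V` and arc set `B`.
-/

/-- There is an arc of `B` from `v` to `w` in the subdigraph `D⟨B⟩`. -/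
def ArcStep {V A : Type*} (ψ : A → V × V) (B : Set A) (v w : V) : Prop :=
  ∃ a ∈ B, ψ a = (v, w)

/-- `v` can `B`-reach `w`: the subdigraph `D⟨B⟩` has a walk from `v` to `w`. -/
def CanReach {V A : Type*} (ψ : A → V × V) (B : Set A) (v w : V) : Prop :=
  Relation.ReflTransGen (ArcStep ψ B) v w

/-- `B ⊆ A` is acyclic: the subdigraph `D⟨B⟩` has no directed cycles
(equivalently, no closed walk of positive length). -/
def IsAcyclic {V A : Type*} (ψ : A → V × V) (B : Set A) : Prop :=
  ∀ v : V, ¬ Relation.TransGen (ArcStep ψ B) v v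

/-- `B` is an `s`-convergence: `B` is acyclic and `s` is a to-root of `D⟨B⟩`,
i.e. every vertex can `B`-reach `s`. -/
def IsConvergence {V A : Type*} (ψ : A → V × V) (B : Set A) (s : V) : Prop :=
  IsAcyclic ψ B ∧ ∀ v : V, CanReach ψ B v s

/-- `γ_k(s)`: the number of `s`-convergences of size `k`. -/
noncomputable def gammaCount {V A : Type*} (ψ : A → V × V) (k : ℕ) (s : V) : ℕ :=
  {B : Set A | IsConvergence ψ B s ∧ B.ncard = k}.ncard

/-- The attraction basin of `s` with respect to `B`: all vertices that can `B`-reach `s`. -/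
def basin {V A : Type*} (ψ : A → V × V) (B : Set A) (s : V) : Set V :=
  {v : V | CanReach ψ B v s}

/-- `A(P,Q)`: the set of arcs with source in `P` and target in `Q`. -/
def arcsFromTo {V A : Type*} (ψ : A → V × V) (P Q : Set V) : Set A :=
  {a : A | (ψ a).1 ∈ P ∧ (ψ a).2 ∈ Q}

/-- The outdegree of a vertex: the number of arcs with source `v`. -/
noncomputable def outDeg {V A : Type*} (ψ : A → V × V) (v : V) : ℕ :=
  {a : A | (ψ a).1 = v}.ncard

/-- The indegree of a vertex: the number of arcs with target `v`. -/
noncomputable def inDeg {V A : Type*} (ψ : A → V × V) (v : V) : ℕ :=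
  {a : A | (ψ a).2 = v}.ncard

/-- The digraph is balanced: each vertex has outdegree equal to indegree. -/
def IsBalanced {V A : Type*} (ψ : A → V × V) : Prop :=
  ∀ v : V, outDeg ψ v = inDeg ψ v

/-- `U_k`: the set of all acyclic `k`-element subsets `B` of `A` such that each
vertex can `B`-reach `s` or can `B`-reach `t`. -/
def Uset {V A : Type*} (ψ : A → V × V) (s t : V) (k : ℕ) : Set (Set A) :=
  {B : Set A | IsAcyclic ψ B ∧ B.ncard = k ∧ basin ψ B s ∪ basin ψ B t = Set.univ}

/-- `X_i^{P,Q}`: the set of all acyclic `i`-element subsets `B` of `A` with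
`S(B) = P` and `T(B) = Q` (empty for negative `i`). -/
def Xset {V A : Type*} (ψ : A → V × V) (s t : V) (P Q : Set V) (i : ℤ) : Set (Set A) :=
  {B : Set A | IsAcyclic ψ B ∧ (B.ncard : ℤ) = i ∧ basin ψ B s = P ∧ basin ψ B t = Q}

/-- `|X_i^{P,Q}|`. -/
noncomputable def Xcount {V A : Type*} (ψ : A → V × V) (s t : V) (P Q : Set V) (i : ℤ) : ℕ :=
  (Xset ψ s t P Q i).ncard

set_option linter.unusedSectionVars false

section Aux

variable {V A : Type*} {ψ : A → V × V}

lemma arcStep_mono {B B' : Set A} (h : B ⊆ B') {v w : V} :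
    ArcStep ψ B v w → ArcStep ψ B' v w := fun ⟨a, ha, he⟩ => ⟨a, h ha, he⟩

lemma canReach_mono {B B' : Set A} (h : B ⊆ B') {v w : V} :
    CanReach ψ B v w → CanReach ψ B' v w :=
  fun hr => Relation.ReflTransGen.mono (r := ArcStep ψ B) (p := ArcStep ψ B') (fun _ _ => arcStep_mono h) v w hr

lemma basin_mono {B B' : Set A} (h : B ⊆ B') (s : V) : basin ψ B s ⊆ basin ψ B' s :=
  fun _ hv => canReach_mono h hv

lemma backward_closed {B : Set A} {P : Set V}
    (hB : ∀ a ∈ B, (ψ a).2 ∈ P → (ψ a).1 ∈ P) {v u : V}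
    (h : CanReach ψ B v u) (hu : u ∈ P) : v ∈ P := by
  induction h using Relation.ReflTransGen.head_induction_on with
  | refl => exact hu
  | head hstep _ ih =>
      obtain ⟨a, ha, he⟩ := hstep
      have := hB a ha
      rw [he] at this
      exact this ih

lemma forward_closed {B : Set A} {Q : Set V}
    (hB : ∀ a ∈ B, (ψ a).1 ∈ Q → (ψ a).2 ∈ Q) {v u : V}
    (h : CanReach ψ B v u) (hv : v ∈ Q) : u ∈ Q := by
  induction h with
  | refl => exact hv
  | tail _ hstep ih =>
      obtain ⟨a, ha, he⟩ := hstep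
      have := hB a ha
      rw [he] at this
      exact this ih

lemma reach_restrict_target {B F : Set A} {P : Set V}
    (hB : ∀ a ∈ B, (ψ a).2 ∈ P → (ψ a).1 ∈ P) (hF : ∀ a ∈ F, (ψ a).2 ∉ P)
    {v u : V} (h : CanReach ψ B v u) (hu : u ∈ P) : CanReach ψ (B \ F) v u := by
  induction h using Relation.ReflTransGen.head_induction_on with
  | refl => exact Relation.ReflTransGen.refl
  | @head x c hstep h' ih =>
      obtain ⟨a, ha, he⟩ := hstep
      have hc : c ∈ P := backward_closed hB h' hu
      have h2 : (ψ a).2 ∈ P := by rw [he]; exact hc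
      exact Relation.ReflTransGen.head ⟨a, ⟨ha, fun hf => hF a hf h2⟩, he⟩ ih

lemma reach_restrict_source {B F : Set A} {Q : Set V}
    (hB : ∀ a ∈ B, (ψ a).1 ∈ Q → (ψ a).2 ∈ Q) (hF : ∀ a ∈ F, (ψ a).1 ∉ Q)
    {v u : V} (h : CanReach ψ B v u) (hv : v ∈ Q) : CanReach ψ (B \ F) v u := by
  revert hv
  induction h using Relation.ReflTransGen.head_induction_on with
  | refl => exact fun _ => Relation.ReflTransGen.refl
  | @head x c hstep h' ih =>
      intro hv
      obtain ⟨a, ha, he⟩ := hstep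
      have h1 : (ψ a).1 ∈ Q := by rw [he]; exact hv
      have h2 := hB a ha h1
      have hc : c ∈ Q := by rw [he] at h2; exact h2
      exact Relation.ReflTransGen.head ⟨a, ⟨ha, fun hf => hF a hf h1⟩, he⟩ (ih hc)

lemma transgen_forward {B B' : Set A} {Q : Set V}
    (hB : ∀ a ∈ B, (ψ a).1 ∈ Q → a ∈ B' ∧ (ψ a).2 ∈ Q) {v w : V}
    (h : Relation.TransGen (ArcStep ψ B) v w) (hv : v ∈ Q) :
    Relation.TransGen (ArcStep ψ B') v w ∧ w ∈ Q := by
  induction h with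
  | single hstep =>
      obtain ⟨a, ha, he⟩ := hstep
      have h1 : (ψ a).1 ∈ Q := by rw [he]; exact hv
      obtain ⟨haB', h2⟩ := hB a ha h1
      rw [he] at h2
      exact ⟨Relation.TransGen.single ⟨a, haB', he⟩, h2⟩
  | @tail b c _ hstep ih =>
      obtain ⟨a, ha, he⟩ := hstep
      have h1 : (ψ a).1 ∈ Q := by rw [he]; exact ih.2
      obtain ⟨haB', h2⟩ := hB a ha h1
      rw [he] at h2
      exact ⟨ih.1.tail ⟨a, haB', he⟩, h2⟩

lemma transgen_backward {B B' : Set A} {P : Set V}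
    (hB : ∀ a ∈ B, (ψ a).2 ∈ P → a ∈ B' ∧ (ψ a).1 ∈ P) {v w : V}
    (h : Relation.TransGen (ArcStep ψ B) v w) (hw : w ∈ P) :
    Relation.TransGen (ArcStep ψ B') v w ∧ v ∈ P := by
  induction h using Relation.TransGen.head_induction_on with
  | single hstep =>
      obtain ⟨a, ha, he⟩ := hstep
      have h2 : (ψ a).2 ∈ P := by rw [he]; exact hw
      obtain ⟨haB', h1⟩ := hB a ha h2
      rw [he] at h1
      exact ⟨Relation.TransGen.single ⟨a, haB', he⟩, h1⟩
  | @head x c hstep _ ih =>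
      obtain ⟨a, ha, he⟩ := hstep
      have h2 : (ψ a).2 ∈ P := by rw [he]; exact ih.2
      obtain ⟨haB', h1⟩ := hB a ha h2
      rw [he] at h1
      exact ⟨Relation.TransGen.head ⟨a, haB', he⟩ ih.1, h1⟩

lemma ncard_prod' {α β : Type*} (S : Set α) (T : Set β) :
    (S ×ˢ T).ncard = S.ncard * T.ncard := by
  rw [← Nat.card_coe_set_eq, ← Nat.card_coe_set_eq, ← Nat.card_coe_set_eq,
    ← Nat.card_prod]
  exact Nat.card_congr (Equiv.Set.prod S T)

lemma ncard_subsets {α : Type*} (F : Set α) (hF : F.Finite) (m : ℕ) :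
    {C : Set α | C ⊆ F ∧ C.ncard = m}.ncard = F.ncard.choose m := by
  classical
  have himg : {C : Set α | C ⊆ F ∧ C.ncard = m}
      = (fun (u : Finset α) => (u : Set α)) '' ↑(Finset.powersetCard m hF.toFinset) := by
    ext C
    simp only [Set.mem_setOf_eq, Set.mem_image, Finset.mem_coe, Finset.mem_powersetCard]
    constructor
    · rintro ⟨hCF, hCm⟩
      have hCfin : C.Finite := hF.subset hCF
      refine ⟨hCfin.toFinset, ⟨?_, ?_⟩, hCfin.coe_toFinset⟩
      · rw [Set.Finite.toFinset_subset_toFinset]; exact hCF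
      · rw [← Set.ncard_eq_toFinset_card _ hCfin]; exact hCm
    · rintro ⟨u, ⟨hu1, hu2⟩, rfl⟩
      refine ⟨?_, by rw [Set.ncard_coe_finset]; exact hu2⟩
      intro x hx
      have := hu1 hx
      rwa [Set.Finite.mem_toFinset] at this
  rw [himg, Set.ncard_image_of_injective _ Finset.coe_injective, Set.ncard_coe_finset,
    Finset.card_powersetCard, Set.ncard_eq_toFinset_card _ hF]

lemma ncard_fiberwise {α : Type*} {S : Set α} (hS : S.Finite) (f : α → ℕ) (n : ℕ)
    (hf : ∀ a ∈ S, f a < n) :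
    S.ncard = ∑ m ∈ Finset.range n, {a ∈ S | f a = m}.ncard := by
  classical
  rw [Set.ncard_eq_toFinset_card _ hS,
    Finset.card_eq_sum_card_fiberwise (f := f) (t := Finset.range n)
      (fun a ha => Finset.mem_range.mpr (hf a (hS.mem_toFinset.mp ha)))]
  refine Finset.sum_congr rfl fun m _ => ?_
  rw [Set.ncard_eq_toFinset_card _ (hS.subset (Set.sep_subset _ _))]
  congr 1
  ext a
  simp [Set.Finite.mem_toFinset]

end Aux

section Main

variable {V A : Type*} [Fintype V] [Fintype A]

lemma key1 (ψ : A → V × V) (s : V) {P : Set V} {B : Set A} (hbs : basin ψ B s = P) :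
    ∀ a ∈ B, (ψ a).2 ∈ P → (ψ a).1 ∈ P := by
  intro a ha h2
  rw [← hbs] at h2 ⊢
  exact Relation.ReflTransGen.head ⟨a, ha, rfl⟩ h2


lemma count_fiber (ψ : A → V × V) (s t : V) (k : ℕ)
    (P Q : Set V) (hQ : Q.Nonempty)
    (hunion : P ∪ Q = Set.univ) (hdisj : P ∩ Q = ∅) (m : ℕ) :
    {B ∈ {B ∈ Uset ψ s t k | basin ψ B s = P} | (B ∩ arcsFromTo ψ P Q).ncard = m}.ncard
      = Nat.choose (arcsFromTo ψ P Q).ncard m * Xcount ψ s t P Q ((k : ℤ) - m) := by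
  classical
  set F := arcsFromTo ψ P Q with hFdef
  set X := Xset ψ s t P Q ((k : ℤ) - m) with hXdef
  have hPorQ : ∀ v : V, v ∈ P ∨ v ∈ Q := fun v => by
    have : v ∈ P ∪ Q := by rw [hunion]; trivial
    exact this
  have hnot : ∀ v : V, v ∈ P → v ∈ Q → False := fun v hp hq => by
    have : v ∈ P ∩ Q := ⟨hp, hq⟩
    rw [hdisj] at this
    exact this
  -- facts about members of the Xset
  have hXnoF : ∀ B' ∈ X, ∀ a ∈ B', a ∉ F := by
    rintro B' ⟨_, _, hbs, hbt⟩ a ha haf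
    exact hnot _ haf.1 (key1 ψ t hbt a ha haf.2)
  have hinterF : ∀ C B' : Set A, C ⊆ F → (∀ a ∈ B', a ∉ F) → (C ∪ B') ∩ F = C := by
    intro C B' hCF hB'F
    ext a
    constructor
    · rintro ⟨ha | ha, haf⟩
      · exact ha
      · exact absurd haf (hB'F a ha)
    · intro ha
      exact ⟨Or.inl ha, hCF ha⟩
  have hdiffF : ∀ C B' : Set A, C ⊆ F → (∀ a ∈ B', a ∉ F) → (C ∪ B') \ F = B' := by
    intro C B' hCF hB'F
    ext a
    constructor
    · rintro ⟨ha | ha, haf⟩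
      · exact absurd (hCF ha) haf
      · exact ha
    · intro ha
      exact ⟨Or.inr ha, hB'F a ha⟩
  have himg : {B ∈ {B ∈ Uset ψ s t k | basin ψ B s = P} | (B ∩ F).ncard = m}
      = (fun p : Set A × Set A => p.1 ∪ p.2) ''
          (({C : Set A | C ⊆ F ∧ C.ncard = m}) ×ˢ X) := by
    ext B
    simp only [Set.mem_setOf_eq, Set.mem_image, Set.mem_prod, Uset, Xset, hXdef, Prod.exists]
    constructor
    · rintro ⟨⟨⟨hac, hcard, hb⟩, hbs⟩, hm⟩
      have hA1 : ∀ a ∈ B, (ψ a).2 ∈ P → (ψ a).1 ∈ P := key1 ψ s hbs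
      have hA2 : ∀ a ∈ B, (ψ a).1 ∈ Q → (ψ a).2 ∈ Q := fun a ha h1 =>
        (hPorQ _).resolve_left fun h2 => hnot _ (hA1 a ha h2) h1
      have hsP : s ∈ P := by rw [← hbs]; exact Relation.ReflTransGen.refl
      have hreachT : ∀ v ∈ Q, CanReach ψ B v t := by
        intro v hv
        have hvu : v ∈ basin ψ B s ∪ basin ψ B t := by rw [hb]; trivial
        rcases hvu with h | h
        · rw [hbs] at h
          exact absurd hv (fun hq => hnot v h hq)
        · exact h
      have htQ : t ∈ Q := by
        obtain ⟨v, hv⟩ := hQ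
        exact forward_closed hA2 (hreachT v hv) hv
      refine ⟨B ∩ F, B \ F, ⟨⟨Set.inter_subset_right, hm⟩, ?_, ?_, ?_, ?_⟩,
        Set.inter_union_diff B F⟩
      · -- acyclic
        intro v hv
        exact hac v (Relation.TransGen.mono (r := ArcStep ψ (B \ F)) (p := ArcStep ψ B) (fun _ _ => arcStep_mono Set.diff_subset) v v hv)
      · -- card
        have hsplit : (B ∩ F).ncard + (B \ F).ncard = B.ncard :=
          Set.ncard_inter_add_ncard_diff_eq_ncard B F (Set.toFinite B)
        rw [hm, hcard] at hsplit
        omega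
      · -- basin s
        apply subset_antisymm
        · intro v hv
          rw [← hbs]
          exact basin_mono Set.diff_subset s hv
        · intro v hv
          have : CanReach ψ B v s := by rw [← hbs] at hv; exact hv
          exact reach_restrict_target hA1 (fun a haf hp => hnot _ hp haf.2) this hsP
      · -- basin t
        apply subset_antisymm
        · intro v hv
          refine backward_closed (P := Q) ?_ hv htQ
          rintro a ⟨ha, hanF⟩ h2
          rcases hPorQ (ψ a).1 with h1 | h1
          · exact absurd (⟨h1, h2⟩ : a ∈ F) hanF
          · exact h1
        · intro v hv
          exact reach_restrict_source hA2 (fun a haf hq => hnot _ haf.1 hq) (hreachT v hv) hv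
    · rintro ⟨C, B', ⟨⟨hCF, hCm⟩, hXac, hXcard, hXbs, hXbt⟩, rfl⟩
      have hXmem : B' ∈ X := ⟨hXac, hXcard, hXbs, hXbt⟩
      have hB'F : ∀ a ∈ B', a ∉ F := hXnoF B' hXmem
      have k1 : ∀ a ∈ B', (ψ a).2 ∈ P → (ψ a).1 ∈ P := key1 ψ s hXbs
      have k2 : ∀ a ∈ B', (ψ a).2 ∈ Q → (ψ a).1 ∈ Q := key1 ψ t hXbt
      have hB'Q : ∀ a ∈ B', (ψ a).1 ∈ Q → (ψ a).2 ∈ Q := fun a ha h1 =>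
        (hPorQ _).resolve_left fun h2 => hnot _ (k1 a ha h2) h1
      have hBP : ∀ a ∈ C ∪ B', (ψ a).2 ∈ P → a ∈ B' ∧ (ψ a).1 ∈ P := by
        rintro a (ha | ha) h2
        · exact absurd h2 (fun hp => hnot _ hp (hCF ha).2)
        · exact ⟨ha, k1 a ha h2⟩
      have hBQ : ∀ a ∈ C ∪ B', (ψ a).1 ∈ Q → a ∈ B' ∧ (ψ a).2 ∈ Q := by
        rintro a (ha | ha) h1
        · exact absurd h1 (fun hq => hnot _ (hCF ha).1 hq)
        · exact ⟨ha, hB'Q a ha h1⟩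
      have hsP : s ∈ P := by rw [← hXbs]; exact Relation.ReflTransGen.refl
      have hbasinS : basin ψ (C ∪ B') s = P := by
        apply subset_antisymm
        · intro v hv
          exact backward_closed (fun a ha h2 => (hBP a ha h2).2) hv hsP
        · intro v hv
          have : v ∈ basin ψ B' s := by rw [hXbs]; exact hv
          exact basin_mono Set.subset_union_right s this
      refine ⟨⟨⟨?_, ?_, ?_⟩, hbasinS⟩, ?_⟩
      · -- acyclic
        intro v hv
        rcases hPorQ v with hp | hq
        · exact hXac v (transgen_backward hBP hv hp).1
        · exact hXac v (transgen_forward hBQ hv hq).1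
      · -- card
        have hdisjCB : Disjoint C B' := Set.disjoint_left.mpr fun a haC haB' =>
          hB'F a haB' (hCF haC)
        rw [Set.ncard_union_eq hdisjCB (Set.toFinite C) (Set.toFinite B'), hCm]
        omega
      · -- basins union
        apply Set.eq_univ_of_forall
        intro v
        rcases hPorQ v with hp | hq
        · exact Or.inl (by rw [hbasinS]; exact hp)
        · refine Or.inr ?_
          have : v ∈ basin ψ B' t := by rw [hXbt]; exact hq
          exact basin_mono Set.subset_union_right t this
      · -- cardinality of intersection with F
        rw [hinterF C B' hCF hB'F]
        exact hCm
  rw [himg, Set.ncard_image_of_injOn ?hinj, ncard_prod',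
    ncard_subsets F (Set.toFinite F) m]
  case hinj =>
    rintro ⟨C₁, B₁⟩ ⟨hc1, hx1⟩ ⟨C₂, B₂⟩ ⟨hc2, hx2⟩ heq
    simp only at heq
    have e1 : C₁ = C₂ := by
      rw [← hinterF C₁ B₁ hc1.1 (hXnoF B₁ hx1), ← hinterF C₂ B₂ hc2.1 (hXnoF B₂ hx2), heq]
    have e2 : B₁ = B₂ := by
      rw [← hdiffF C₁ B₁ hc1.1 (hXnoF B₁ hx1), ← hdiffF C₂ B₂ hc2.1 (hXnoF B₂ hx2), heq]
    simp [Prod.ext_iff, e1, e2]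
  rfl

end Main


/-- For nonempty `P, Q` with `V = P ⊔ Q`,
`|{B ∈ U_k : S(B) = P}| = Σ_{m ∈ ℕ} C(|A(P,Q)|, m) · |X_{k−m}^{P,Q}|`. -/
theorem count_S_eq_P_as_sum {V A : Type*} [Fintype V] [Fintype A]
    (ψ : A → V × V) (s t : V) (k : ℕ)
    (P Q : Set V) (hP : P.Nonempty) (hQ : Q.Nonempty)
    (hunion : P ∪ Q = Set.univ) (hdisj : P ∩ Q = ∅) :
    {B ∈ Uset ψ s t k | basin ψ B s = P}.ncard =
      ∑ᶠ m : ℕ,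
        Nat.choose (arcsFromTo ψ P Q).ncard m * Xcount ψ s t P Q ((k : ℤ) - m) := by
  classical
  set F := arcsFromTo ψ P Q with hFdef
  have hsupp : (Function.support fun m : ℕ =>
      Nat.choose F.ncard m * Xcount ψ s t P Q ((k : ℤ) - m)) ⊆ ↑(Finset.range (k + 1)) := by
    intro m hm
    simp only [Function.mem_support] at hm
    have hx : Xcount ψ s t P Q ((k : ℤ) - m) ≠ 0 := fun h => hm (by rw [h, mul_zero])
    obtain ⟨B, hB⟩ := Set.nonempty_of_ncard_ne_zero hx
    have hcard : (B.ncard : ℤ) = (k : ℤ) - m := hB.2.1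
    simp only [Finset.coe_range, Set.mem_Iio]
    omega
  rw [finsum_eq_sum_of_support_subset _ hsupp]
  have hf : ∀ B ∈ {B ∈ Uset ψ s t k | basin ψ B s = P}, (B ∩ F).ncard < k + 1 := by
    rintro B ⟨⟨_, hcard, _⟩, _⟩
    have := Set.ncard_le_ncard (Set.inter_subset_left (s := B) (t := F)) (Set.toFinite B)
    omega
  rw [ncard_fiberwise (Set.toFinite _) (fun B => (B ∩ F).ncard) (k + 1) hf]
  exact Finset.sum_congr rfl fun m _ => count_fiber ψ s t k P Q hQ hunion hdisj m
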